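/- For any real random variable w that is integrable, μ ≠ 0 its mean, and any fixed β, the p=1 expected QAOA energy on a triangle-free (D+1)-regular graph on N vertices with i.i.d. weights satisfies E[⟨C(γ)⟩] = (N(D+1)/2)·(μ/2 + (1/2)·E[w·sin(wγ)]·(E[cos(wγ)])^D), where ⟨C(γ)⟩ is given by the closed-form p=1 expression with β = π/8. -/

import Mathlib

open Finset MeasureTheory Real

variable {n : ℕ}

/-- The index set of edges of `G`, as ordered pairs with increasing endpoints. -/
def EdgeIdx (G : SimpleGraph (Fin n)) [DecidableRel G.Adj] : Type :=
  {p : Fin n × Fin n // p.1 < p.2 ∧ G.Adj p.1 p.2}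

instance (G : SimpleGraph (Fin n)) [DecidableRel G.Adj] : Fintype (EdgeIdx G) :=
  Subtype.fintype _

/-- The weight of the (ordered) pair `(u, v)` determined by an assignment `W` of
weights to the edges of `G`. -/
noncomputable def wOf (G : SimpleGraph (Fin n)) [DecidableRel G.Adj]
    (W : EdgeIdx G → ℝ) (u v : Fin n) : ℝ :=
  if h : u < v ∧ G.Adj u v then W ⟨(u, v), h⟩
  else if h : v < u ∧ G.Adj v u then W ⟨(v, u), h⟩
  else 0

/-- The closed-form `p = 1` QAOA energy `⟨C(γ)⟩` (at `β = π/8`) for weighted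
MaxCut on a triangle-free graph, as a function of the edge weights `W`. -/
noncomputable def qaoaEnergy (G : SimpleGraph (Fin n)) [DecidableRel G.Adj]
    (γ : ℝ) (W : EdgeIdx G → ℝ) : ℝ :=
  (∑ e : EdgeIdx G, wOf G W e.1.1 e.1.2 / 2) +
  (1 / 4) * ∑ e : EdgeIdx G,
      wOf G W e.1.1 e.1.2 * Real.sin (wOf G W e.1.1 e.1.2 * γ) *
        ((∏ k ∈ (G.neighborFinset e.1.1).erase e.1.2, Real.cos (wOf G W e.1.1 k * γ)) +
         (∏ t ∈ (G.neighborFinset e.1.2).erase e.1.1, Real.cos (wOf G W t e.1.2 * γ)))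

/-! ### Auxiliary lemmas -/


lemma prod_ite_single {ι : Type*} [Fintype ι] [DecidableEq ι] (e : ι) (S : Finset ι)
    (he : e ∉ S) (a b : ι → ℝ) :
    ∏ i, (if i = e then a i else if i ∈ S then b i else 1) = a e * ∏ i ∈ S, b i := by
  rw [← Finset.mul_prod_erase Finset.univ _ (Finset.mem_univ e)]
  congr 1
  · simp
  · have hsub : S ⊆ Finset.univ.erase e := fun i hi =>
      Finset.mem_erase.2 ⟨fun h => he (h ▸ hi), Finset.mem_univ i⟩
    have hvan : ∀ i ∈ Finset.univ.erase e, i ∉ S →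
        (if i = e then a i else if i ∈ S then b i else 1) = 1 := by
      intro i hi hiS
      rw [if_neg (Finset.mem_erase.1 hi).1, if_neg hiS]
    rw [← Finset.prod_subset hsub hvan]
    refine Finset.prod_congr rfl fun i hi => ?_
    rw [if_neg (by rintro rfl; exact he hi), if_pos hi]

lemma integral_pi_prod {ι : Type*} [Fintype ι] (ν : Measure ℝ) [IsProbabilityMeasure ν]
    (f : ι → ℝ → ℝ) :
    ∫ W, ∏ i, f i (W i) ∂(Measure.pi fun _ : ι => ν) = ∏ i, ∫ x, f i x ∂ν := by
  letI : MeasureSpace ℝ := ⟨ν⟩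
  haveI : SigmaFinite (volume : Measure ℝ) := inferInstanceAs (SigmaFinite ν)
  exact MeasureTheory.integral_fintype_prod_eq_prod f

lemma integrable_pi_prod {ι : Type*} [Fintype ι] (ν : Measure ℝ) [IsProbabilityMeasure ν]
    (f : ι → ℝ → ℝ) (hf : ∀ i, Integrable (f i) ν) :
    Integrable (fun W : ι → ℝ => ∏ i, f i (W i)) (Measure.pi fun _ : ι => ν) := by
  letI : MeasureSpace ℝ := ⟨ν⟩
  haveI : SigmaFinite (volume : Measure ℝ) := inferInstanceAs (SigmaFinite ν)
  exact MeasureTheory.Integrable.fintype_prod hf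

lemma integral_eval_mul_prod {ι : Type*} [Fintype ι] [DecidableEq ι]
    (ν : Measure ℝ) [IsProbabilityMeasure ν] {f g : ℝ → ℝ}
    (hf : Integrable f ν) (hg : Integrable g ν) (e : ι) (S : Finset ι) (he : e ∉ S) :
    Integrable (fun W : ι → ℝ => f (W e) * ∏ i ∈ S, g (W i)) (Measure.pi fun _ : ι => ν) ∧
    ∫ W, f (W e) * ∏ i ∈ S, g (W i) ∂(Measure.pi fun _ : ι => ν)
      = (∫ x, f x ∂ν) * (∫ x, g x ∂ν) ^ S.card := by
  set h : ι → ℝ → ℝ := fun i x => if i = e then f x else if i ∈ S then g x else 1 with hh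
  have hInt : ∀ i, Integrable (h i) ν := by
    intro i
    simp only [hh]
    split_ifs
    exacts [hf, hg, integrable_const 1]
  have hpt : ∀ W : ι → ℝ, f (W e) * ∏ i ∈ S, g (W i) = ∏ i, h i (W i) := fun W =>
    (prod_ite_single e S he (fun i => f (W i)) (fun i => g (W i))).symm
  constructor
  · exact (integrable_pi_prod ν h hInt).congr
      (Filter.Eventually.of_forall fun W => (hpt W).symm)
  · rw [show (fun W : ι → ℝ => f (W e) * ∏ i ∈ S, g (W i)) = fun W => ∏ i, h i (W i)
      from funext hpt]
    rw [integral_pi_prod ν h]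
    have : ∀ i ∈ Finset.univ, (∫ x, h i x ∂ν) =
        (if i = e then (∫ x, f x ∂ν) else if i ∈ S then (∫ x, g x ∂ν) else 1) := by
      intro i _
      simp only [hh]
      split_ifs <;> simp
    rw [Finset.prod_congr rfl this,
      prod_ite_single e S he (fun _ => ∫ x, f x ∂ν) (fun _ => ∫ x, g x ∂ν),
      Finset.prod_const]

/-! ### Graph lemmas -/

instance (G : SimpleGraph (Fin n)) [DecidableRel G.Adj] : DecidableEq (EdgeIdx G) :=
  fun a b => decidable_of_iff (a.1 = b.1) Subtype.ext_iff.symm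

def eIdx (G : SimpleGraph (Fin n)) [DecidableRel G.Adj] (u v : Fin n) (h : G.Adj u v) :
    EdgeIdx G :=
  if h' : u < v then ⟨(u, v), h', h⟩
  else ⟨(v, u), lt_of_le_of_ne (not_lt.1 h') h.ne', h.symm⟩

lemma wOf_eq (G : SimpleGraph (Fin n)) [DecidableRel G.Adj] (W : EdgeIdx G → ℝ)
    {u v : Fin n} (h : G.Adj u v) : wOf G W u v = W (eIdx G u v h) := by
  unfold wOf eIdx
  rcases lt_or_gt_of_ne h.ne with h1 | h1
  · rw [dif_pos (⟨h1, h⟩ : u < v ∧ G.Adj u v)]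
    erw [dif_pos h1]
  · rw [dif_neg (fun hc => absurd hc.1 (asymm h1)), dif_pos ⟨h1, h.symm⟩]
    erw [dif_neg (not_lt.2 h1.le)]

lemma wOf_symm (G : SimpleGraph (Fin n)) [DecidableRel G.Adj] (W : EdgeIdx G → ℝ)
    (u v : Fin n) : wOf G W u v = wOf G W v u := by
  unfold wOf
  split_ifs with h1 h2 h2 <;> first | rfl | exact absurd h2.1 (asymm h1.1)

lemma wOf_idx (G : SimpleGraph (Fin n)) [DecidableRel G.Adj] (W : EdgeIdx G → ℝ)
    (e : EdgeIdx G) : wOf G W e.1.1 e.1.2 = W e := by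
  unfold wOf
  rw [dif_pos e.2]
  exact congrArg W (Subtype.ext rfl)

lemma eIdx_self (G : SimpleGraph (Fin n)) [DecidableRel G.Adj] (e : EdgeIdx G) :
    eIdx G e.1.1 e.1.2 e.2.2 = e := by
  unfold eIdx
  erw [dif_pos e.2.1]
  exact Subtype.ext rfl

lemma eIdx_symm (G : SimpleGraph (Fin n)) [DecidableRel G.Adj] {u v : Fin n}
    (h : G.Adj u v) : eIdx G u v h = eIdx G v u h.symm := by
  unfold eIdx
  rcases lt_or_gt_of_ne h.ne with h1 | h1
  · erw [dif_pos h1, dif_neg (not_lt.2 h1.le)]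
  · erw [dif_neg (not_lt.2 h1.le), dif_pos h1]

lemma eIdx_inj (G : SimpleGraph (Fin n)) [DecidableRel G.Adj] {u a b : Fin n}
    (ha : G.Adj u a) (hb : G.Adj u b) (h : eIdx G u a ha = eIdx G u b hb) : a = b := by
  unfold eIdx EdgeIdx at h
  split_ifs at h with h1 h2 h2 <;>
  · replace h := congrArg (fun x : EdgeIdx G => x.1) h
    simp only [Prod.mk.injEq] at h
    first
    | exact h.2
    | exact h.1
    | exact h.2.trans h.1
    | exact h.1.trans h.2

noncomputable def nbrEdges (G : SimpleGraph (Fin n)) [DecidableRel G.Adj]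
    (u v : Fin n) : Finset (EdgeIdx G) :=
  ((G.neighborFinset u).erase v).attach.image fun k =>
    eIdx G u k.1 ((SimpleGraph.mem_neighborFinset G u k.1).1 (Finset.mem_erase.1 k.2).2)

lemma prod_nbrEdges (G : SimpleGraph (Fin n)) [DecidableRel G.Adj] (W : EdgeIdx G → ℝ)
    (φ : ℝ → ℝ) (u v : Fin n) :
    ∏ i ∈ nbrEdges G u v, φ (W i) = ∏ k ∈ (G.neighborFinset u).erase v, φ (wOf G W u k) := by
  unfold nbrEdges
  rw [Finset.prod_image (fun x _ y _ hxy => Subtype.ext (eIdx_inj G _ _ hxy))]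
  rw [← Finset.prod_attach ((G.neighborFinset u).erase v) (fun k => φ (wOf G W u k))]
  exact Finset.prod_congr rfl fun k _ => by rw [wOf_eq G W]

lemma prod_nbrEdges_cos (G : SimpleGraph (Fin n)) [DecidableRel G.Adj] (W : EdgeIdx G → ℝ)
    (γ : ℝ) (u v : Fin n) :
    ∏ i ∈ nbrEdges G u v, Real.cos (W i * γ)
      = ∏ k ∈ (G.neighborFinset u).erase v, Real.cos (wOf G W u k * γ) :=
  prod_nbrEdges G W (fun x => Real.cos (x * γ)) u v

lemma card_nbrEdges (G : SimpleGraph (Fin n)) [DecidableRel G.Adj] (u v : Fin n) :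
    (nbrEdges G u v).card = ((G.neighborFinset u).erase v).card := by
  unfold nbrEdges
  rw [Finset.card_image_of_injOn (fun x _ y _ hxy => Subtype.ext (eIdx_inj G _ _ hxy)),
    Finset.card_attach]

lemma eIdx_not_mem_nbrEdges (G : SimpleGraph (Fin n)) [DecidableRel G.Adj] {u v : Fin n}
    (h : G.Adj u v) : eIdx G u v h ∉ nbrEdges G u v := by
  unfold nbrEdges
  intro hm
  obtain ⟨k, _, heq⟩ := Finset.mem_image.1 hm
  exact (Finset.mem_erase.1 k.2).1 (eIdx_inj G _ _ heq)

lemma card_edgeIdx (G : SimpleGraph (Fin n)) [DecidableRel G.Adj] :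
    Fintype.card (EdgeIdx G) = G.edgeFinset.card := by
  rw [← Fintype.card_coe]
  refine Fintype.card_of_bijective (f := fun e : EdgeIdx G =>
    (⟨s(e.1.1, e.1.2), SimpleGraph.mem_edgeFinset.2 e.2.2⟩ : G.edgeFinset)) ⟨?_, ?_⟩
  · intro e1 e2 h
    replace h := congrArg Subtype.val h
    simp only [Sym2.eq, Sym2.rel_iff', Prod.mk.injEq, Prod.swap_prod_mk] at h
    rcases h with ⟨h1, h2⟩ | ⟨h1, h2⟩
    · exact Subtype.ext (Prod.ext h1 h2)
    · exact absurd (h1 ▸ h2 ▸ e2.2.1) (asymm e1.2.1)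
  · rintro ⟨s, hs⟩
    induction s using Sym2.ind with
    | _ u v =>
      have hadj : G.Adj u v := SimpleGraph.mem_edgeFinset.1 hs
      rcases lt_or_gt_of_ne hadj.ne with h1 | h1
      · exact ⟨⟨(u, v), h1, hadj⟩, rfl⟩
      · exact ⟨⟨(v, u), h1, hadj.symm⟩, Subtype.ext (Sym2.eq_swap)⟩

/-! ### The per-edge term -/

noncomputable def termFun (G : SimpleGraph (Fin n)) [DecidableRel G.Adj] (γ : ℝ)
    (e : EdgeIdx G) (W : EdgeIdx G → ℝ) : ℝ :=
  W e / 2 * ∏ i ∈ (∅ : Finset (EdgeIdx G)), Real.cos (W i * γ)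
  + ((1 / 4) * (W e * Real.sin (W e * γ) * ∏ i ∈ nbrEdges G e.1.1 e.1.2, Real.cos (W i * γ))
   + (1 / 4) * (W e * Real.sin (W e * γ) * ∏ i ∈ nbrEdges G e.1.2 e.1.1, Real.cos (W i * γ)))

lemma qaoa_eq_sum (G : SimpleGraph (Fin n)) [DecidableRel G.Adj] (γ : ℝ)
    (W : EdgeIdx G → ℝ) :
    qaoaEnergy G γ W = ∑ e : EdgeIdx G, termFun G γ e W := by
  unfold qaoaEnergy termFun
  rw [Finset.mul_sum, ← Finset.sum_add_distrib]
  refine Finset.sum_congr rfl fun e _ => ?_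
  have h2 : ∏ t ∈ (G.neighborFinset e.1.2).erase e.1.1, Real.cos (wOf G W t e.1.2 * γ)
      = ∏ t ∈ (G.neighborFinset e.1.2).erase e.1.1, Real.cos (wOf G W e.1.2 t * γ) :=
    Finset.prod_congr rfl fun t _ => by rw [wOf_symm]
  rw [wOf_idx G W e, h2, ← prod_nbrEdges_cos G W γ e.1.1 e.1.2,
    ← prod_nbrEdges_cos G W γ e.1.2 e.1.1]
  simp only [Finset.prod_empty, mul_one]
  ring

lemma e_not_mem_nbrEdges₁ (G : SimpleGraph (Fin n)) [DecidableRel G.Adj] (e : EdgeIdx G) :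
    e ∉ nbrEdges G e.1.1 e.1.2 := by
  have := eIdx_not_mem_nbrEdges G e.2.2
  rwa [eIdx_self] at this

lemma e_not_mem_nbrEdges₂ (G : SimpleGraph (Fin n)) [DecidableRel G.Adj] (e : EdgeIdx G) :
    e ∉ nbrEdges G e.1.2 e.1.1 := by
  have := eIdx_not_mem_nbrEdges G e.2.2.symm
  rwa [← eIdx_symm G e.2.2, eIdx_self] at this

lemma integral_termFun (G : SimpleGraph (Fin n)) [DecidableRel G.Adj] {γ : ℝ}
    {ν : Measure ℝ} [IsProbabilityMeasure ν]
    (hhalf : Integrable (fun x : ℝ => x / 2) ν)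
    (hF : Integrable (fun x : ℝ => x * Real.sin (x * γ)) ν)
    (hC : Integrable (fun x : ℝ => Real.cos (x * γ)) ν)
    {D : ℕ} (hreg : ∀ v, G.degree v = D + 1) (e : EdgeIdx G) :
    Integrable (termFun G γ e) (Measure.pi fun _ : EdgeIdx G => ν) ∧
    ∫ W, termFun G γ e W ∂(Measure.pi fun _ : EdgeIdx G => ν)
      = (∫ x, x ∂ν) / 2 +
        (1 / 2) * (∫ x, x * Real.sin (x * γ) ∂ν) * (∫ x, Real.cos (x * γ) ∂ν) ^ D := by
  have hcard1 : (nbrEdges G e.1.1 e.1.2).card = D := by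
    rw [card_nbrEdges,
      Finset.card_erase_of_mem ((SimpleGraph.mem_neighborFinset G e.1.1 e.1.2).2 e.2.2),
      SimpleGraph.card_neighborFinset_eq_degree, hreg]
    omega
  have hcard2 : (nbrEdges G e.1.2 e.1.1).card = D := by
    rw [card_nbrEdges,
      Finset.card_erase_of_mem ((SimpleGraph.mem_neighborFinset G e.1.2 e.1.1).2 e.2.2.symm),
      SimpleGraph.card_neighborFinset_eq_degree, hreg]
    omega
  obtain ⟨hA, hAval⟩ := integral_eval_mul_prod ν hhalf hC e ∅ (Finset.notMem_empty e)
  obtain ⟨hB, hBval⟩ := integral_eval_mul_prod ν hF hC e _ (e_not_mem_nbrEdges₁ G e)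
  obtain ⟨hB2, hB2val⟩ := integral_eval_mul_prod ν hF hC e _ (e_not_mem_nbrEdges₂ G e)
  rw [hcard1] at hBval
  rw [hcard2] at hB2val
  set P := Measure.pi fun _ : EdgeIdx G => ν
  have hA' : Integrable (fun W : EdgeIdx G → ℝ =>
      W e / 2 * ∏ i ∈ (∅ : Finset (EdgeIdx G)), Real.cos (W i * γ)) P := hA
  have hB' : Integrable (fun W : EdgeIdx G → ℝ =>
      W e * Real.sin (W e * γ) * ∏ i ∈ nbrEdges G e.1.1 e.1.2, Real.cos (W i * γ)) P := hB
  have hB2' : Integrable (fun W : EdgeIdx G → ℝ =>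
      W e * Real.sin (W e * γ) * ∏ i ∈ nbrEdges G e.1.2 e.1.1, Real.cos (W i * γ)) P := hB2
  have hAval' : ∫ W, W e / 2 * ∏ i ∈ (∅ : Finset (EdgeIdx G)), Real.cos (W i * γ) ∂P
      = (∫ x, x / 2 ∂ν) * (∫ x, Real.cos (x * γ) ∂ν) ^ (0 : ℕ) := hAval
  have hBval' : ∫ W, W e * Real.sin (W e * γ) *
        ∏ i ∈ nbrEdges G e.1.1 e.1.2, Real.cos (W i * γ) ∂P
      = (∫ x, x * Real.sin (x * γ) ∂ν) * (∫ x, Real.cos (x * γ) ∂ν) ^ D := hBval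
  have hB2val' : ∫ W, W e * Real.sin (W e * γ) *
        ∏ i ∈ nbrEdges G e.1.2 e.1.1, Real.cos (W i * γ) ∂P
      = (∫ x, x * Real.sin (x * γ) ∂ν) * (∫ x, Real.cos (x * γ) ∂ν) ^ D := hB2val
  have hB'' : Integrable (fun W : EdgeIdx G → ℝ =>
      (1 / 4) * (W e * Real.sin (W e * γ) *
        ∏ i ∈ nbrEdges G e.1.1 e.1.2, Real.cos (W i * γ))) P := hB'.const_mul (1 / 4)
  have hB2'' : Integrable (fun W : EdgeIdx G → ℝ =>
      (1 / 4) * (W e * Real.sin (W e * γ) *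
        ∏ i ∈ nbrEdges G e.1.2 e.1.1, Real.cos (W i * γ))) P := hB2'.const_mul (1 / 4)
  have hBC : Integrable (fun W : EdgeIdx G → ℝ =>
      (1 / 4) * (W e * Real.sin (W e * γ) *
        ∏ i ∈ nbrEdges G e.1.1 e.1.2, Real.cos (W i * γ))
      + (1 / 4) * (W e * Real.sin (W e * γ) *
        ∏ i ∈ nbrEdges G e.1.2 e.1.1, Real.cos (W i * γ))) P := hB''.add hB2''
  constructor
  · exact hA'.add hBC
  · unfold termFun
    rw [integral_add hA' hBC, integral_add hB'' hB2'',
      integral_const_mul, integral_const_mul, hAval', hBval', hB2val', integral_div]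
    ring

/-- For i.i.d. integrable edge weights with distribution `ν` and nonzero mean on a
triangle-free `(D+1)`-regular graph on `N` vertices, the expected `p = 1` QAOA
energy factorizes:
`E[⟨C(γ)⟩] = (N(D+1)/2)·(μ/2 + (1/2)·E[w·sin(wγ)]·(E[cos(wγ)])^D)`. -/
theorem expected_qaoa_energy_regular (G : SimpleGraph (Fin n)) [DecidableRel G.Adj]
    (D : ℕ) (htri : G.CliqueFree 3) (hreg : ∀ v, G.degree v = D + 1)
    (ν : Measure ℝ) [IsProbabilityMeasure ν]
    (hint : Integrable (fun x : ℝ => x) ν) (hμ : (∫ x, x ∂ν) ≠ 0) (γ : ℝ) :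
    ∫ W, qaoaEnergy G γ W ∂(Measure.pi fun _ : EdgeIdx G => ν) =
      ((n : ℝ) * (D + 1) / 2) *
        ((∫ x, x ∂ν) / 2 +
          (1 / 2) * (∫ x, x * Real.sin (x * γ) ∂ν) * (∫ x, Real.cos (x * γ) ∂ν) ^ D) := by
  have hhalf : Integrable (fun x : ℝ => x / 2) ν := hint.div_const 2
  have hF : Integrable (fun x : ℝ => x * Real.sin (x * γ)) ν := by
    refine hint.mono ((continuous_id.mul (Real.continuous_sin.comp
      (continuous_id.mul continuous_const))).aestronglyMeasurable) ?_
    filter_upwards with x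
    rw [norm_eq_abs, norm_eq_abs, abs_mul]
    exact mul_le_of_le_one_right (abs_nonneg x) (Real.abs_sin_le_one _)
  have hC : Integrable (fun x : ℝ => Real.cos (x * γ)) ν := by
    refine (integrable_const (1 : ℝ)).mono ((Real.continuous_cos.comp
      (continuous_id.mul continuous_const)).aestronglyMeasurable) ?_
    filter_upwards with x
    simpa using Real.abs_cos_le_one (x * γ)
  have h0 : ∫ W, qaoaEnergy G γ W ∂(Measure.pi fun _ : EdgeIdx G => ν)
      = ∫ W, ∑ e : EdgeIdx G, termFun G γ e W ∂(Measure.pi fun _ : EdgeIdx G => ν) := by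
    congr 1
    funext W
    exact qaoa_eq_sum G γ W
  rw [h0, integral_finset_sum _ (fun e _ => (integral_termFun G hhalf hF hC hreg e).1),
    Finset.sum_congr rfl (fun e _ => (integral_termFun G hhalf hF hC hreg e).2),
    Finset.sum_const, Finset.card_univ, nsmul_eq_mul]
  have hcard : ((Fintype.card (EdgeIdx G) : ℝ)) = (n : ℝ) * (D + 1) / 2 := by
    have h2 : ∑ v, G.degree v = 2 * G.edgeFinset.card :=
      SimpleGraph.sum_degrees_eq_twice_card_edges G
    simp only [hreg, Finset.sum_const, Finset.card_univ, Fintype.card_fin, smul_eq_mul] at h2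
    have h3 : (n : ℝ) * ((D : ℝ) + 1) = 2 * (G.edgeFinset.card : ℝ) := by exact_mod_cast h2
    rw [card_edgeIdx]
    linarith
  rw [hcard]
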